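/- Consider Γ = ℤ with ℓ(n) = |n| and φ(n) = 1/|n| for n ≠ 0, φ(0)=0, and SAWs on the complete graph over ℤ with weight ∏ φ(steps) and ℓ-length ∑ ℓ(steps). Then the total weight of SAWs from 0 with ℓ-length in [m, m+1) is at most 4^m; in particular the connective constant μ_{φ,ℓ} satisfies μ_{φ,ℓ} ≤ 4, even though ∑_n φ(n) = ∞. -/

import Mathlib

open Filter Topology
open scoped ENNReal

/-- The weight function `φ(n) = 1/|n|` (with `φ(0)=0`) on `ℤ`. -/
noncomputable def phiZ : ℤ → ℝ := fun k => if k = 0 then 0 else (|(k : ℝ)|)⁻¹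

/-- The length function `ℓ(n) = |n|` on `ℤ`. -/
def lenZ : ℤ → ℝ := fun k => |(k : ℝ)|

/-- An `n`-step self-avoiding walk from `0` on the complete graph over `ℤ`. -/
def ZSAW (n : ℕ) (π : Fin (n + 1) → ℤ) : Prop :=
  Function.Injective π ∧ π 0 = 0

/-- The weight of a walk on `ℤ`. -/
noncomputable def zWeight (n : ℕ) (π : Fin (n + 1) → ℤ) : ℝ :=
  ∏ i : Fin n, phiZ (π i.succ - π i.castSucc)

/-- The `ℓ`-length of a walk on `ℤ`. -/
noncomputable def zLen (n : ℕ) (π : Fin (n + 1) → ℤ) : ℝ :=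
  ∑ i : Fin n, lenZ (π i.succ - π i.castSucc)

/-- `w(σ_{m,1})`: total weight of SAWs from `0` with `ℓ`-length in `[m, m+1)`. -/
noncomputable def zSawWeightIn (m : ℝ) : ℝ≥0∞ :=
  ∑' p : {p : Σ n : ℕ, Fin (n + 1) → ℤ //
      ZSAW p.1 p.2 ∧ zLen p.1 p.2 ∈ Set.Ico m (m + 1)},
    ENNReal.ofReal (zWeight p.1.1 p.1.2)

namespace ZExample

/-- Encode a nonzero step `d` as `|d|` symbols: a sign bit, with a marker on the last one. -/
def enc (d : ℤ) : List (Bool × Bool) :=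
  List.replicate (d.natAbs - 1) (decide (0 < d), false) ++ [(decide (0 < d), true)]

def encL (l : List ℤ) : List (Bool × Bool) := (l.map enc).flatten

def decodeStep : List (Bool × Bool) → Option (ℤ × List (Bool × Bool))
  | [] => none
  | (s, true) :: rest => some ((if s then 1 else -1), rest)
  | (s, false) :: rest =>
      (decodeStep rest).map fun p => ((if s then p.1 + 1 else p.1 - 1), p.2)

lemma decodeStep_cons_true (s : Bool) (rest : List (Bool × Bool)) :
    decodeStep ((s, true) :: rest) = some ((if s then 1 else -1), rest) := rfl

lemma decodeStep_cons_false (s : Bool) (rest : List (Bool × Bool)) :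
    decodeStep ((s, false) :: rest) =
      (decodeStep rest).map fun p => ((if s then p.1 + 1 else p.1 - 1), p.2) := rfl

lemma enc_ne_nil (d : ℤ) : enc d ≠ [] := by
  simp [enc]

lemma length_enc (d : ℤ) (hd : d ≠ 0) : (enc d).length = d.natAbs := by
  have h1 : 1 ≤ d.natAbs := by omega
  simp [enc]
  omega

lemma decode_enc : ∀ a : ℕ, ∀ d : ℤ, d ≠ 0 → d.natAbs = a → ∀ rest,
    decodeStep (enc d ++ rest) = some (d, rest) := by
  intro a
  induction a with
  | zero => intro d hd ha; exact absurd (Int.natAbs_eq_zero.mp ha) hd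
  | succ a ih =>
    intro d hd ha rest
    rcases Nat.eq_zero_or_pos a with h0 | hpos
    · subst h0
      have : d = 1 ∨ d = -1 := by omega
      rcases this with rfl | rfl <;> simp [enc, decodeStep]
    · rcases hd.lt_or_gt with hneg | hposd
      · have hd' : (d + 1) ≠ 0 := by omega
        have ha' : (d + 1).natAbs = a := by omega
        have hsd : decide (0 < d) = false := by simp; omega
        have hsd' : decide (0 < d + 1) = false := by simp; omega
        have hrep : enc d = (false, false) :: enc (d + 1) := by
          simp only [enc, hsd, hsd', ha', ha]
          obtain ⟨b, rfl⟩ : ∃ b, a = b + 1 := ⟨a - 1, by omega⟩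
          simp [List.replicate_succ]
        rw [hrep, List.cons_append, decodeStep_cons_false, ih (d + 1) hd' ha' rest]
        simp
      · have hd' : (d - 1) ≠ 0 := by omega
        have ha' : (d - 1).natAbs = a := by omega
        have hsd : decide (0 < d) = true := by simp; omega
        have hsd' : decide (0 < d - 1) = true := by simp; omega
        have hrep : enc d = (true, false) :: enc (d - 1) := by
          simp only [enc, hsd, hsd', ha', ha]
          obtain ⟨b, rfl⟩ : ∃ b, a = b + 1 := ⟨a - 1, by omega⟩
          simp [List.replicate_succ]
        rw [hrep, List.cons_append, decodeStep_cons_false, ih (d - 1) hd' ha' rest]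
        simp

lemma encL_nil : encL [] = [] := by simp [encL]

lemma encL_cons (d : ℤ) (t : List ℤ) : encL (d :: t) = enc d ++ encL t := by
  simp [encL]

lemma encL_inj : ∀ l₁ l₂ : List ℤ, (∀ d ∈ l₁, d ≠ 0) → (∀ d ∈ l₂, d ≠ 0) →
    encL l₁ = encL l₂ → l₁ = l₂ := by
  intro l₁
  induction l₁ with
  | nil =>
    intro l₂ _ h₂ h
    cases l₂ with
    | nil => rfl
    | cons d t =>
      rw [encL_nil, encL_cons] at h
      exact absurd h.symm (by simp [enc_ne_nil d])
  | cons d₁ t₁ ih =>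
    intro l₂ h₁ h₂ h
    cases l₂ with
    | nil =>
      rw [encL_nil, encL_cons] at h
      exact absurd h (by simp [enc_ne_nil d₁])
    | cons d₂ t₂ =>
      rw [encL_cons, encL_cons] at h
      have e₁ := decode_enc d₁.natAbs d₁ (h₁ d₁ (by simp)) rfl (encL t₁)
      have e₂ := decode_enc d₂.natAbs d₂ (h₂ d₂ (by simp)) rfl (encL t₂)
      rw [h, e₂] at e₁
      obtain ⟨hd, ht⟩ := Prod.mk.injEq .. ▸ Option.some.inj e₁
      subst hd
      rw [ih t₂ (fun x hx => h₁ x (by simp [hx])) (fun x hx => h₂ x (by simp [hx])) ht.symm]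

/-- The list of steps of a walk. -/
def steps (p : Σ n : ℕ, Fin (n + 1) → ℤ) : List ℤ :=
  List.ofFn fun i : Fin p.1 => p.2 i.succ - p.2 i.castSucc

lemma steps_nonzero (p : Σ n : ℕ, Fin (n + 1) → ℤ) (hp : Function.Injective p.2) :
    ∀ d ∈ steps p, d ≠ 0 := by
  intro d hd h
  subst h
  simp only [steps, List.mem_ofFn, Set.mem_range] at hd
  obtain ⟨i, hi⟩ := hd
  have heq : p.2 i.succ = p.2 i.castSucc := by omega
  have h1 := hp heq
  have h2 : (i.succ : Fin (p.1 + 1)).val = (i.castSucc : Fin (p.1 + 1)).val := by rw [h1]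
  simp [Fin.val_succ, Fin.coe_castSucc] at h2

lemma walk_eq {n : ℕ} (π ρ : Fin (n + 1) → ℤ) (hπ : π 0 = 0) (hρ : ρ 0 = 0)
    (h : ∀ i : Fin n, π i.succ - π i.castSucc = ρ i.succ - ρ i.castSucc) : π = ρ := by
  funext i
  induction i using Fin.induction with
  | zero => rw [hπ, hρ]
  | succ i ih => have := h i; omega

lemma steps_injective (p q : Σ n : ℕ, Fin (n + 1) → ℤ)
    (hp : p.2 0 = 0) (hq : q.2 0 = 0) (h : steps p = steps q) : p = q := by
  obtain ⟨n, π⟩ := p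
  obtain ⟨n', ρ⟩ := q
  have hn : n = n' := by
    have := congrArg List.length h
    simpa [steps] using this
  subst hn
  have hf := List.ofFn_injective h
  have : π = ρ := walk_eq π ρ hp hq (fun i => congrFun hf i)
  rw [this]

lemma phiZ_nonneg (d : ℤ) : 0 ≤ phiZ d := by
  unfold phiZ
  split
  · exact le_refl 0
  · exact inv_nonneg.mpr (abs_nonneg _)

lemma phiZ_le_one (d : ℤ) : phiZ d ≤ 1 := by
  unfold phiZ
  split
  · norm_num
  · rename_i hd
    rw [inv_le_one_iff₀]
    right
    rw [← Int.cast_abs]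
    exact_mod_cast Int.one_le_abs (by exact_mod_cast hd)

lemma zWeight_le_one (n : ℕ) (π : Fin (n + 1) → ℤ) : zWeight n π ≤ 1 :=
  Finset.prod_le_one (fun _ _ => phiZ_nonneg _) (fun _ _ => phiZ_le_one _)

lemma hlen_lemma (m : ℕ) (p : Σ n : ℕ, Fin (n + 1) → ℤ) (hinj : Function.Injective p.2)
    (hIco : zLen p.1 p.2 ∈ Set.Ico (m : ℝ) ((m : ℝ) + 1)) :
    (encL (steps p)).length = m := by
  obtain ⟨n, π⟩ := p
  simp only at hinj hIco ⊢
  have hL : zLen n π = ((∑ i : Fin n, (π i.succ - π i.castSucc).natAbs : ℕ) : ℝ) := by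
    rw [zLen]
    push_cast
    refine Finset.sum_congr rfl fun i _ => ?_
    rw [lenZ, Nat.cast_natAbs]
    push_cast
    rfl
  set N : ℕ := ∑ i : Fin n, (π i.succ - π i.castSucc).natAbs with hN
  have hNm : N = m := by
    rw [hL] at hIco
    obtain ⟨h1, h2⟩ := hIco
    have hh1 : m ≤ N := by exact_mod_cast h1
    have hh2 : N < m + 1 := by exact_mod_cast h2
    omega
  have hnz := steps_nonzero ⟨n, π⟩ hinj
  rw [encL, List.length_flatten]
  simp only [steps] at hnz ⊢
  rw [List.map_map, List.map_ofFn, List.sum_ofFn, ← hNm, hN]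
  refine Finset.sum_congr rfl fun i _ => ?_
  simp only [Function.comp_apply]
  refine length_enc _ (hnz _ ?_)
  simp only [List.mem_ofFn, Set.mem_range]
  exact ⟨i, rfl⟩

/-- The injection from `ℓ`-length-`m` SAWs to `Fin m → Bool × Bool`. -/
def F (m : ℕ)
    (p : {p : Σ n : ℕ, Fin (n + 1) → ℤ //
      ZSAW p.1 p.2 ∧ zLen p.1 p.2 ∈ Set.Ico (m : ℝ) ((m : ℝ) + 1)}) :
    Fin m → Bool × Bool :=
  fun j => (encL (steps p.1)).getD j.val default

lemma F_inj (m : ℕ) : Function.Injective (F m) := by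
  intro p q hpq
  have hlp := hlen_lemma m p.1 p.2.1.1 p.2.2
  have hlq := hlen_lemma m q.1 q.2.1.1 q.2.2
  have hlist : encL (steps p.1) = encL (steps q.1) := by
    refine List.ext_get (by rw [hlp, hlq]) (fun i h1 h2 => ?_)
    have := congrFun hpq ⟨i, by rw [← hlp]; exact h1⟩
    simp only [F] at this
    rw [List.getD_eq_getElem?_getD, List.getD_eq_getElem?_getD, List.getElem?_eq_getElem h1,
      List.getElem?_eq_getElem h2] at this
    simpa using this
  have hsteps : steps p.1 = steps q.1 :=
    encL_inj _ _ (steps_nonzero p.1 p.2.1.1) (steps_nonzero q.1 q.2.1.1) hlist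
  exact Subtype.ext (steps_injective p.1 q.1 p.2.1.2 q.2.1.2 hsteps)

lemma key (m : ℕ) : zSawWeightIn (m : ℝ) ≤ (4 : ℝ≥0∞) ^ m := by
  classical
  have hfin : Finite {p : Σ n : ℕ, Fin (n + 1) → ℤ //
      ZSAW p.1 p.2 ∧ zLen p.1 p.2 ∈ Set.Ico (m : ℝ) ((m : ℝ) + 1)} :=
    Finite.of_injective (F m) (F_inj m)
  haveI := Fintype.ofFinite {p : Σ n : ℕ, Fin (n + 1) → ℤ //
      ZSAW p.1 p.2 ∧ zLen p.1 p.2 ∈ Set.Ico (m : ℝ) ((m : ℝ) + 1)}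
  have hcard : Fintype.card {p : Σ n : ℕ, Fin (n + 1) → ℤ //
      ZSAW p.1 p.2 ∧ zLen p.1 p.2 ∈ Set.Ico (m : ℝ) ((m : ℝ) + 1)} ≤ 4 ^ m := by
    have h := Fintype.card_le_of_injective (F m) (F_inj m)
    simpa using h
  calc zSawWeightIn (m : ℝ)
      = ∑ p : {p : Σ n : ℕ, Fin (n + 1) → ℤ //
          ZSAW p.1 p.2 ∧ zLen p.1 p.2 ∈ Set.Ico (m : ℝ) ((m : ℝ) + 1)},
          ENNReal.ofReal (zWeight p.1.1 p.1.2) := by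
        rw [zSawWeightIn, tsum_fintype]
    _ ≤ ∑ _p : {p : Σ n : ℕ, Fin (n + 1) → ℤ //
          ZSAW p.1 p.2 ∧ zLen p.1 p.2 ∈ Set.Ico (m : ℝ) ((m : ℝ) + 1)}, (1 : ℝ≥0∞) := by
        refine Finset.sum_le_sum fun p _ => ?_
        rw [← ENNReal.ofReal_one]
        exact ENNReal.ofReal_le_ofReal (zWeight_le_one _ _)
    _ = (Fintype.card {p : Σ n : ℕ, Fin (n + 1) → ℤ //
          ZSAW p.1 p.2 ∧ zLen p.1 p.2 ∈ Set.Ico (m : ℝ) ((m : ℝ) + 1)} : ℝ≥0∞) := by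
        simp
    _ ≤ ((4 ^ m : ℕ) : ℝ≥0∞) := by exact_mod_cast hcard
    _ = (4 : ℝ≥0∞) ^ m := by push_cast; rfl

end ZExample

open ZExample in
/-- Example 3.9: on `Γ = ℤ` with `ℓ(n) = |n|` and `φ(n) = 1/|n|` (a non-summable
weight), the total weight of SAWs from `0` with `ℓ`-length in `[m, m+1)` is at
most `4^m`; in particular `μ_{φ,ℓ} ≤ 4`. -/
theorem example_Z_connective_constant_le_four :
    (∀ m : ℕ, 1 ≤ m → zSawWeightIn (m : ℝ) ≤ (4 : ℝ≥0∞) ^ m) ∧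
    Filter.limsup (fun m : ℕ => (zSawWeightIn (m : ℝ)) ^ (1 / (m : ℝ))) atTop ≤ 4 := by
  refine ⟨fun m _ => key m, ?_⟩
  refine Filter.limsup_le_of_le (by isBoundedDefault) ?_
  filter_upwards [Filter.eventually_ge_atTop 1] with m hm
  have h4 : ((4 : ℝ≥0∞) ^ m) ^ (1 / (m : ℝ)) = 4 := by
    have hm0 : (m : ℝ) ≠ 0 := Nat.cast_ne_zero.mpr (by omega)
    rw [← ENNReal.rpow_natCast 4 m, ← ENNReal.rpow_mul, mul_one_div_cancel hm0,
      ENNReal.rpow_one]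
  calc zSawWeightIn (m : ℝ) ^ (1 / (m : ℝ))
      ≤ ((4 : ℝ≥0∞) ^ m) ^ (1 / (m : ℝ)) :=
        ENNReal.rpow_le_rpow (key m) (by positivity)
    _ = 4 := h4
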